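/- The Hegselmann-Krause update map preserves the ordering of opinions: if x(1) ≤ x(2) ≤ ... ≤ x(n) and y is the HK update of x, then y(1) ≤ y(2) ≤ ... ≤ y(n). -/

import Mathlib

open scoped Classical

lemma avg_key {ι : Type*} [DecidableEq ι] (S D : Finset ι) (f : ι → ℝ) (hS : S.Nonempty)
    (hdisj : Disjoint S D) (h : ∀ s ∈ S, ∀ d ∈ D, f s ≤ f d) :
    (∑ j ∈ S, f j) / (S.card : ℝ) ≤ (∑ j ∈ S ∪ D, f j) / (((S ∪ D).card : ℕ) : ℝ) := by
  rw [Finset.sum_union hdisj, Finset.card_union_of_disjoint hdisj]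
  have hS0 : (0:ℝ) < (S.card : ℝ) := by exact_mod_cast hS.card_pos
  have hD0 : (0:ℝ) ≤ (D.card : ℝ) := by positivity
  have hSD : (0:ℝ) < ((S.card + D.card : ℕ) : ℝ) := by
    push_cast; linarith
  rw [div_le_div_iff₀ hS0 hSD]
  push_cast
  have key : (∑ j ∈ S, f j) * (D.card : ℝ) ≤ (S.card : ℝ) * (∑ j ∈ D, f j) := by
    have h1 : (∑ j ∈ S, f j) * (D.card : ℝ) = ∑ s ∈ S, ∑ d ∈ D, f s := by
      rw [Finset.sum_mul]
      exact Finset.sum_congr rfl fun s _ => by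
        rw [Finset.sum_const, nsmul_eq_mul, mul_comm]
    have h2 : (S.card : ℝ) * (∑ j ∈ D, f j) = ∑ s ∈ S, ∑ d ∈ D, f d := by
      rw [Finset.sum_const, nsmul_eq_mul]
    rw [h1, h2]
    exact Finset.sum_le_sum fun s hs => Finset.sum_le_sum fun d hd => h s hs d hd
  nlinarith [key]

lemma avg_key' {ι : Type*} [DecidableEq ι] (S D : Finset ι) (f : ι → ℝ) (hS : S.Nonempty)
    (hdisj : Disjoint S D) (h : ∀ s ∈ S, ∀ d ∈ D, f d ≤ f s) :
    (∑ j ∈ S ∪ D, f j) / (((S ∪ D).card : ℕ) : ℝ) ≤ (∑ j ∈ S, f j) / (S.card : ℝ) := by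
  have := avg_key S D (fun i => -(f i)) hS hdisj (fun s hs d hd => neg_le_neg (h s hs d hd))
  simp only [Finset.sum_neg_distrib, neg_div] at this
  linarith

/-- The Hegselmann-Krause update with confidence bound 1. -/
noncomputable def hkUpdate {n : ℕ} (x : Fin n → ℝ) : Fin n → ℝ := fun i =>
  (∑ j ∈ Finset.univ.filter (fun j => |x j - x i| ≤ 1), x j) /
    ((Finset.univ.filter (fun j => |x j - x i| ≤ 1)).card : ℝ)

/-- The HK update map preserves the ordering of opinions. -/
theorem hk_update_monotone {n : ℕ} (x : Fin n → ℝ) (hx : Monotone x) :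
    Monotone (hkUpdate x) := by
  intro i k hik
  have hxik : x i ≤ x k := hx hik
  set Ni := Finset.univ.filter (fun j => |x (j : Fin n) - x i| ≤ 1) with hNi
  set Nk := Finset.univ.filter (fun j => |x (j : Fin n) - x k| ≤ 1) with hNk
  have hiNi : i ∈ Ni := by
    simp [hNi]
  have hkNk : k ∈ Nk := by
    simp [hNk]
  have hNine : Ni.Nonempty := ⟨i, hiNi⟩
  have hNkne : Nk.Nonempty := ⟨k, hkNk⟩
  have memNi : ∀ j, j ∈ Ni ↔ |x j - x i| ≤ 1 := by
    intro j; simp [hNi]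
  have memNk : ∀ j, j ∈ Nk ↔ |x j - x k| ≤ 1 := by
    intro j; simp [hNk]
  -- Step 1: avg Ni ≤ avg (Ni ∪ Nk)
  have h1 : (∑ j ∈ Ni, x j) / (Ni.card : ℝ) ≤
      (∑ j ∈ Ni ∪ Nk, x j) / (((Ni ∪ Nk).card : ℕ) : ℝ) := by
    have := avg_key Ni (Nk \ Ni) x hNine Finset.disjoint_sdiff ?_
    · rwa [Finset.union_sdiff_self_eq_union] at this
    · intro s hs d hd
      rw [memNi] at hs
      rw [Finset.mem_sdiff, memNk, memNi] at hd
      obtain ⟨hd1, hd2⟩ := hd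
      rw [abs_le] at hs hd1
      rw [not_le, lt_abs] at hd2
      rcases hd2 with h' | h' <;> linarith [hs.1, hs.2, hd1.1, hd1.2]
  -- Step 2: avg (Ni ∪ Nk) ≤ avg Nk
  have h2 : (∑ j ∈ Ni ∪ Nk, x j) / (((Ni ∪ Nk).card : ℕ) : ℝ) ≤
      (∑ j ∈ Nk, x j) / (Nk.card : ℝ) := by
    have := avg_key' Nk (Ni \ Nk) x hNkne Finset.disjoint_sdiff ?_
    · rwa [Finset.union_sdiff_self_eq_union, Finset.union_comm] at this
    · intro s hs d hd
      rw [memNk] at hs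
      rw [Finset.mem_sdiff, memNi, memNk] at hd
      obtain ⟨hd1, hd2⟩ := hd
      rw [abs_le] at hs hd1
      rw [not_le, lt_abs] at hd2
      rcases hd2 with h' | h' <;> linarith [hs.1, hs.2, hd1.1, hd1.2]
  calc hkUpdate x i = (∑ j ∈ Ni, x j) / (Ni.card : ℝ) := rfl
    _ ≤ (∑ j ∈ Ni ∪ Nk, x j) / (((Ni ∪ Nk).card : ℕ) : ℝ) := h1
    _ ≤ (∑ j ∈ Nk, x j) / (Nk.card : ℝ) := h2
    _ = hkUpdate x k := rfl
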